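/- Let X be a nonempty set and Ψ a nonempty set of functions g : X → ℝ with |g(x)| ≤ 1 for all g ∈ Ψ and x ∈ X. Let λ > 1, K ≥ 1, H ≥ 1, and points x_h^k ∈ X for k ∈ {1,…,K}, h ∈ {1,…,H}, and suppose d ∈ ℕ is such that the ℓ1-Eluder dimension of Ψ at scale 1/(8λKH) is at most d. Then the number of indices k ∈ {1,…,K} satisfying sup_{g∈Ψ} (λ + ∑_{k'=1}^{k} ∑_{h=1}^{H} |g(x_h^{k'})|) / (λ + ∑_{k'=1}^{k−1} ∑_{h=1}^{H} |g(x_h^{k'})|) > 4 is at most 13·(log₂(4λKH))²·d. -/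

import Mathlib

open Finset

/-- A finite sequence `a : Fin m → X` is `ε`-independent for `Ψ` if for every index `i`
there is `g ∈ Ψ` with `∑_{j<i} |g (a j)| ≤ ε` and `|g (a i)| > ε`. -/
def IsEpsIndep {X : Type*} (Ψ : Set (X → ℝ)) (ε : ℝ) {m : ℕ} (a : Fin m → X) : Prop :=
  ∀ i : Fin m, ∃ g ∈ Ψ, (∑ j ∈ Finset.Iio i, |g (a j)|) ≤ ε ∧ ε < |g (a i)|

/-- The ℓ1-Eluder dimension of `Ψ` at scale `ε₀` is at most `d`: for every `ε ≥ ε₀`,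
every `ε`-independent sequence for `Ψ` has length at most `d`. -/
def EluderDimLE {X : Type*} (Ψ : Set (X → ℝ)) (ε₀ : ℝ) (d : ℕ) : Prop :=
  ∀ ε ≥ ε₀, ∀ m : ℕ, ∀ a : Fin m → X, IsEpsIndep Ψ ε a → m ≤ d

noncomputable def gcStep (w : ℕ → ℕ → ℝ) (ε : ℝ) (N : ℕ) (c : ℕ → Fin (N + 1)) (i : ℕ) :
    Fin (N + 1) :=
  if h : ∃ t : Fin (N + 1),
      ∑ j ∈ (Finset.range i).filter (fun j => c j = t), w i j ≤ ε then h.choose else 0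

noncomputable def gcAux (w : ℕ → ℕ → ℝ) (ε : ℝ) (N : ℕ) : ℕ → ℕ → Fin (N + 1)
  | 0 => fun _ => 0
  | n + 1 => Function.update (gcAux w ε N n) n (gcStep w ε N (gcAux w ε N n) n)

noncomputable def gc (w : ℕ → ℕ → ℝ) (ε : ℝ) (N : ℕ) (i : ℕ) : Fin (N + 1) :=
  gcAux w ε N (i + 1) i

lemma gcAux_eq (w : ℕ → ℕ → ℝ) (ε : ℝ) (N : ℕ) :
    ∀ n i, i < n → gcAux w ε N n i = gc w ε N i := by
  intro n
  induction n with
  | zero => intro i hi; omega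
  | succ n ih =>
    intro i hi
    rcases Nat.lt_succ_iff_lt_or_eq.mp hi with h | rfl
    · rw [gcAux, Function.update_of_ne (by omega)]
      exact ih i h
    · rfl

lemma gcStep_congr (w : ℕ → ℕ → ℝ) (ε : ℝ) (N : ℕ) (c₁ c₂ : ℕ → Fin (N + 1)) (i : ℕ)
    (h : ∀ j < i, c₁ j = c₂ j) : gcStep w ε N c₁ i = gcStep w ε N c₂ i := by
  have hf : ∀ t : Fin (N + 1), (Finset.range i).filter (fun j => c₁ j = t)
      = (Finset.range i).filter (fun j => c₂ j = t) := by
    intro t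
    apply Finset.filter_congr
    intro j hj
    rw [h j (Finset.mem_range.mp hj)]
  unfold gcStep
  simp only [hf]

lemma gc_eq_step (w : ℕ → ℕ → ℝ) (ε : ℝ) (N : ℕ) (i : ℕ) :
    gc w ε N i = gcStep w ε N (gc w ε N) i := by
  have h1 : gc w ε N i = gcStep w ε N (gcAux w ε N i) i := by
    show gcAux w ε N (i + 1) i = _
    rw [gcAux, Function.update_self]
  rw [h1]
  exact gcStep_congr w ε N _ _ i (fun j hj => gcAux_eq w ε N i j hj)

lemma gc_spec (w : ℕ → ℕ → ℝ) (ε C : ℝ) (N : ℕ) (i : ℕ)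
    (hw : ∀ j, 0 ≤ w i j) (hC : ∑ j ∈ Finset.range i, w i j ≤ C)
    (hN : C < (N + 1) * ε) :
    ∑ j ∈ (Finset.range i).filter (fun j => gc w ε N j = gc w ε N i), w i j ≤ ε := by
  rw [gc_eq_step w ε N i]
  unfold gcStep
  by_cases h : ∃ t : Fin (N + 1),
      ∑ j ∈ (Finset.range i).filter (fun j => gc w ε N j = t), w i j ≤ ε
  · rw [dif_pos h]
    exact h.choose_spec
  · exfalso
    push_neg at h
    have htot : ∑ t : Fin (N + 1),
        ∑ j ∈ (Finset.range i).filter (fun j => gc w ε N j = t), w i j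
        = ∑ j ∈ Finset.range i, w i j :=
      Finset.sum_fiberwise _ _ _
    have hlt : ∑ t : Fin (N + 1), ε < ∑ t : Fin (N + 1),
        ∑ j ∈ (Finset.range i).filter (fun j => gc w ε N j = t), w i j := by
      apply Finset.sum_lt_sum_of_nonempty
      · exact Finset.univ_nonempty
      · intro t _; exact h t
    rw [htot] at hlt
    simp only [Finset.sum_const, Finset.card_univ, Fintype.card_fin, nsmul_eq_mul] at hlt
    push_cast at hlt
    linarith

lemma sum_Iio_orderEmb (s : Finset ℕ) (f : ℕ → ℝ) {m : ℕ} (h : s.card = m) (i : Fin m) :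
    ∑ j ∈ Finset.Iio i, f (s.orderEmbOfFin h j) =
      ∑ y ∈ s.filter (fun y => y < s.orderEmbOfFin h i), f y := by
  apply Finset.sum_bij (fun j _ => s.orderEmbOfFin h j)
  · intro j hj
    rw [Finset.mem_filter]
    refine ⟨Finset.orderEmbOfFin_mem s h j, ?_⟩
    exact (OrderEmbedding.lt_iff_lt _).mpr (Finset.mem_Iio.mp hj)
  · intro j₁ _ j₂ _ hj
    exact (s.orderEmbOfFin h).injective hj
  · intro y hy
    rw [Finset.mem_filter] at hy
    have hyr : y ∈ Set.range (s.orderEmbOfFin h) := by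
      rw [Finset.range_orderEmbOfFin]; exact Finset.mem_coe.mpr hy.1
    obtain ⟨j, hj⟩ := hyr
    refine ⟨j, ?_, hj⟩
    rw [Finset.mem_Iio]
    have := hy.2
    rw [← hj] at this
    exact (OrderEmbedding.lt_iff_lt _).mp this
  · intro j _; rfl

lemma lemA2 {X : Type*} (Ψ : Set (X → ℝ)) (ε₀ : ℝ) (d : ℕ)
    (hd : EluderDimLE Ψ ε₀ d) (ε C : ℝ) (hεε₀ : ε₀ ≤ ε)
    (N : ℕ) (hNC : C < (N + 1) * ε)
    (F : Finset ℕ) (b : ℕ → X) (g : ℕ → X → ℝ)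
    (hmem : ∀ i ∈ F, g i ∈ Ψ)
    (hbig : ∀ i ∈ F, ε < |g i (b i)|)
    (hpre : ∀ i ∈ F, ∑ j ∈ F.filter (fun j => j < i), |g i (b j)| ≤ C) :
    F.card ≤ (N + 1) * d := by
  classical
  set w : ℕ → ℕ → ℝ := fun i j => if j ∈ F then |g i (b j)| else 0 with hw
  set c : ℕ → Fin (N + 1) := gc w ε N with hc
  have hwnn : ∀ i j, 0 ≤ w i j := by
    intro i j; simp only [hw]; split <;> positivity
  have hspec : ∀ i ∈ F,
      ∑ j ∈ (Finset.range i).filter (fun j => c j = c i), w i j ≤ ε := by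
    intro i hi
    apply gc_spec w ε C N i (hwnn i) _ hNC
    have hset : (Finset.range i).filter (fun j => j ∈ F) = F.filter (fun j => j < i) := by
      ext j
      simp only [Finset.mem_filter, Finset.mem_range]
      tauto
    have : ∑ j ∈ Finset.range i, w i j = ∑ j ∈ F.filter (fun j => j < i), |g i (b j)| := by
      rw [← hset, Finset.sum_filter]
    rw [this]
    exact hpre i hi
  have hclass : ∀ t : Fin (N + 1), (F.filter (fun i => c i = t)).card ≤ d := by
    intro t
    set s := F.filter (fun i => c i = t) with hs
    set a : Fin s.card → X := fun i => b (s.orderEmbOfFin rfl i) with ha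
    have hindep : IsEpsIndep Ψ ε a := by
      intro i
      set y : ℕ := s.orderEmbOfFin rfl i with hy
      have hys : y ∈ s := Finset.orderEmbOfFin_mem s rfl i
      have hyF : y ∈ F := (Finset.mem_filter.mp hys).1
      have hyt : c y = t := (Finset.mem_filter.mp hys).2
      refine ⟨g y, hmem y hyF, ?_, hbig y hyF⟩
      have h1 : ∑ j ∈ Finset.Iio i, |g y (a j)| =
          ∑ z ∈ s.filter (fun z => z < y), |g y (b z)| := by
        simpa using sum_Iio_orderEmb s (fun z => |g y (b z)|) rfl i
      have h2 : s.filter (fun z => z < y) =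
          ((Finset.range y).filter (fun j => c j = c y)).filter (fun j => j ∈ F) := by
        ext z
        simp only [hs, Finset.mem_filter, Finset.mem_range, hyt]
        tauto
      have h3 : ∑ z ∈ s.filter (fun z => z < y), |g y (b z)| =
          ∑ j ∈ (Finset.range y).filter (fun j => c j = c y), w y j := by
        rw [h2, Finset.sum_filter]
      rw [h1, h3]
      exact hspec y hyF
    exact hd ε hεε₀ s.card a hindep
  have hcard : F.card = ∑ t : Fin (N + 1), (F.filter (fun i => c i = t)).card :=
    Finset.card_eq_sum_card_fiberwise (fun i _ => Finset.mem_univ (c i))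
  calc F.card = ∑ t : Fin (N + 1), (F.filter (fun i => c i = t)).card := hcard
    _ ≤ ∑ _t : Fin (N + 1), d := Finset.sum_le_sum (fun t _ => hclass t)
    _ = (N + 1) * d := by simp [Finset.sum_const, mul_comm]

lemma selmass (lo hi : ℕ) (u : ℕ → ℝ) (hu : ∀ m, 0 ≤ u m) (cap : ℝ)
    (hcap : cap ≤ ∑ m ∈ Finset.Ico lo hi, u m) :
    cap ≤ ∑ m ∈ (Finset.Ico lo hi).filter
      (fun m => (∑ m' ∈ Finset.Ico lo m, u m') < cap), u m := by
  classical
  by_cases hU : ∀ m ∈ Finset.Ico lo hi, (∑ m' ∈ Finset.Ico lo m, u m') < cap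
  · rw [Finset.filter_true_of_mem hU]; exact hcap
  · push_neg at hU
    set U := (Finset.Ico lo hi).filter
      (fun m => ¬ (∑ m' ∈ Finset.Ico lo m, u m') < cap) with hUdef
    have hUne : U.Nonempty := by
      obtain ⟨m, hm, hm2⟩ := hU
      exact ⟨m, Finset.mem_filter.mpr ⟨hm, not_lt.mpr hm2⟩⟩
    set m₀ := U.min' hUne with hm₀def
    have hm₀U : m₀ ∈ U := U.min'_mem hUne
    have hm₀Ico : m₀ ∈ Finset.Ico lo hi := (Finset.mem_filter.mp hm₀U).1
    have hm₀cap : cap ≤ ∑ m' ∈ Finset.Ico lo m₀, u m' :=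
      not_lt.mp (Finset.mem_filter.mp hm₀U).2
    refine le_trans hm₀cap (Finset.sum_le_sum_of_subset_of_nonneg ?_ (fun m _ _ => hu m))
    intro m hm
    rw [Finset.mem_Ico] at hm
    have hm₀hi : m₀ < hi := (Finset.mem_Ico.mp hm₀Ico).2
    have hmIco : m ∈ Finset.Ico lo hi := Finset.mem_Ico.mpr ⟨hm.1, lt_trans hm.2 hm₀hi⟩
    refine Finset.mem_filter.mpr ⟨hmIco, ?_⟩
    by_contra hc
    have hmU : m ∈ U := Finset.mem_filter.mpr ⟨hmIco, hc⟩
    have := U.min'_le m hmU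
    omega

lemma lt_div_succ_mul (a b : ℕ) (hb : 0 < b) : a < (a/b + 1) * b := by
  conv_lhs => rw [← Nat.div_add_mod' a b]
  rw [Nat.succ_mul]
  exact Nat.add_lt_add_left (Nat.mod_lt a hb) _

lemma pow_nat_le_of_le_logb {y : ℝ} (n : ℕ) (hy : 0 < y) (h : (n:ℝ) ≤ Real.logb 2 y) :
    (2:ℝ)^n ≤ y := by
  rw [← Real.rpow_natCast 2 n]
  exact (Real.le_logb_iff_rpow_le (by norm_num) hy).mp h

lemma le_pow_nat_of_logb_le {y : ℝ} (n : ℕ) (hy : 0 < y) (h : Real.logb 2 y ≤ (n:ℝ)) :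
    y ≤ (2:ℝ)^n := by
  rw [← Real.rpow_natCast 2 n]
  exact (Real.logb_le_iff_le_rpow (by norm_num) hy).mp h

lemma lt_pow_nat_of_logb_lt {y : ℝ} (n : ℕ) (hy : 0 < y) (h : Real.logb 2 y < (n:ℝ)) :
    y < (2:ℝ)^n := by
  rw [← Real.rpow_natCast 2 n]
  exact (Real.logb_lt_iff_lt_rpow (by norm_num) hy).mp h

set_option maxHeartbeats 2000000 in
set_option maxRecDepth 8000 in
/-- the number of episodes `k` along which the self-normalized ratio
exceeds `4` is at most `13·(log₂(4λKH))²·d`. -/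
theorem card_bad_episodes_le {X : Type*} [Nonempty X]
    (Ψ : Set (X → ℝ)) (hΨne : Ψ.Nonempty) (hΨbdd : ∀ g ∈ Ψ, ∀ x, |g x| ≤ 1)
    (lam : ℝ) (hlam : 1 < lam) (K H : ℕ) (hK : 1 ≤ K) (hH : 1 ≤ H)
    (x : Fin K → Fin H → X)
    (d : ℕ) (hd : EluderDimLE Ψ (1 / (8 * lam * K * H)) d) :
    (({k : Fin K | 4 <
        ⨆ g : Ψ, (lam + ∑ k' ∈ Finset.Iic k, ∑ h, |(g : X → ℝ) (x k' h)|) /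
          (lam + ∑ k' ∈ Finset.Iio k, ∑ h, |(g : X → ℝ) (x k' h)|)}.ncard : ℝ)) ≤
      13 * (Real.logb 2 (4 * lam * K * H)) ^ 2 * d := by
  classical
  obtain ⟨ψ₀, hψ₀⟩ := hΨne
  haveI : Nonempty ↥Ψ := ⟨⟨ψ₀, hψ₀⟩⟩
  have hK0 : 0 < K := hK
  have hH0 : 0 < H := hH
  have hK1 : (1:ℝ) ≤ (K:ℝ) := by exact_mod_cast hK
  have hH1 : (1:ℝ) ≤ (H:ℝ) := by exact_mod_cast hH
  have hKH1 : (1:ℝ) ≤ (K:ℝ) * H := by nlinarith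
  have hlam0 : (0:ℝ) < lam := by linarith
  set Bset := {k : Fin K | 4 <
        ⨆ g : Ψ, (lam + ∑ k' ∈ Finset.Iic k, ∑ h, |(g : X → ℝ) (x k' h)|) /
          (lam + ∑ k' ∈ Finset.Iio k, ∑ h, |(g : X → ℝ) (x k' h)|)} with hBdef
  -- choose witnesses
  have hsum_nonneg : ∀ (f : X → ℝ) (s : Finset (Fin K)),
      0 ≤ ∑ k' ∈ s, ∑ h, |f (x k' h)| :=
    fun f s => Finset.sum_nonneg fun k' _ => Finset.sum_nonneg fun h _ => abs_nonneg _
  have hsum_le : ∀ (f : X → ℝ), f ∈ Ψ → ∀ (s : Finset (Fin K)),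
      ∑ k' ∈ s, ∑ h, |f (x k' h)| ≤ (K:ℝ) * H := by
    intro f hf s
    have hinner : ∀ k' : Fin K, ∑ h, |f (x k' h)| ≤ (H:ℝ) := by
      intro k'
      calc ∑ h, |f (x k' h)| ≤ ∑ _h : Fin H, (1:ℝ) :=
            Finset.sum_le_sum (fun h _ => hΨbdd f hf _)
        _ = (H:ℝ) := by simp
    calc ∑ k' ∈ s, ∑ h, |f (x k' h)| ≤ ∑ _k' ∈ s, (H:ℝ) :=
          Finset.sum_le_sum (fun k' _ => hinner k')
      _ = s.card * H := by simp [mul_comm]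
      _ ≤ (K:ℝ) * H := by
          have : s.card ≤ K := by
            calc s.card ≤ (Finset.univ : Finset (Fin K)).card := Finset.card_le_card
                  (Finset.subset_univ s)
              _ = K := by simp
          have : (s.card : ℝ) ≤ (K:ℝ) := by exact_mod_cast this
          nlinarith
  have hch : ∀ k : Fin K, ∃ g, g ∈ Ψ ∧ (k ∈ Bset →
      4 < (lam + ∑ k' ∈ Finset.Iic k, ∑ h, |g (x k' h)|) /
          (lam + ∑ k' ∈ Finset.Iio k, ∑ h, |g (x k' h)|)) := by
    intro k
    by_cases hk : k ∈ Bset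
    · have hbdd : BddAbove (Set.range fun g : Ψ =>
          (lam + ∑ k' ∈ Finset.Iic k, ∑ h, |(g : X → ℝ) (x k' h)|) /
          (lam + ∑ k' ∈ Finset.Iio k, ∑ h, |(g : X → ℝ) (x k' h)|)) := by
        refine ⟨lam + (K:ℝ) * H, ?_⟩
        rintro y ⟨⟨f, hf⟩, rfl⟩
        have h1 : (0:ℝ) ≤ lam + ∑ k' ∈ Finset.Iic k, ∑ h, |f (x k' h)| := by
          have := hsum_nonneg f (Finset.Iic k); linarith
        have h2 : (1:ℝ) ≤ lam + ∑ k' ∈ Finset.Iio k, ∑ h, |f (x k' h)| := by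
          have := hsum_nonneg f (Finset.Iio k); linarith
        calc (lam + ∑ k' ∈ Finset.Iic k, ∑ h, |f (x k' h)|) /
              (lam + ∑ k' ∈ Finset.Iio k, ∑ h, |f (x k' h)|)
            ≤ lam + ∑ k' ∈ Finset.Iic k, ∑ h, |f (x k' h)| := div_le_self h1 h2
          _ ≤ lam + (K:ℝ) * H := by
              have := hsum_le f hf (Finset.Iic k); linarith
      have hk' : 4 < ⨆ g : Ψ, (lam + ∑ k' ∈ Finset.Iic k, ∑ h, |(g : X → ℝ) (x k' h)|) /
          (lam + ∑ k' ∈ Finset.Iio k, ∑ h, |(g : X → ℝ) (x k' h)|) := hk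
      obtain ⟨⟨f, hf⟩, hflt⟩ := (lt_ciSup_iff hbdd).mp hk'
      exact ⟨f, hf, fun _ => hflt⟩
    · exact ⟨ψ₀, hψ₀, fun h => absurd h hk⟩
  choose G hGΨ hGbad using hch
  set P : Fin K → ℝ := fun k => ∑ k' ∈ Finset.Iio k, ∑ h, |G k (x k' h)| with hPdef
  set D : Fin K → ℝ := fun k => ∑ h, |G k (x k h)| with hDdef
  have hP0 : ∀ k, 0 ≤ P k := fun k => hsum_nonneg (G k) (Finset.Iio k)
  have hPle : ∀ k, P k ≤ (K:ℝ) * H := fun k => hsum_le (G k) (hGΨ k) (Finset.Iio k)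
  have hD3 : ∀ k ∈ Bset, 3 * (lam + P k) < D k := by
    intro k hk
    have h4 := hGbad k hk
    have hden : 0 < lam + P k := by have := hP0 k; linarith
    rw [lt_div_iff₀ hden] at h4
    have hsplit : ∑ k' ∈ Finset.Iic k, ∑ h, |G k (x k' h)| = D k + P k := by
      rw [← Finset.Iio_insert k, Finset.sum_insert (by simp)]
    rw [hsplit] at h4
    linarith
  -- scale parameters
  set L := Real.logb 2 (4 * lam * ↑K * ↑H) with hLdef
  have h4KH0 : (0:ℝ) < 4 * lam * K * H := by nlinarith
  have hL2 : 2 < L := by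
    have h1 : Real.logb 2 4 < L := by
      apply Real.logb_lt_logb (by norm_num) (by norm_num)
      nlinarith
    have h2 : Real.logb 2 4 = 2 := by
      rw [show (4:ℝ) = 2^(2:ℕ) by norm_num, Real.logb_pow, Real.logb_self_eq_one (by norm_num : (1:ℝ) < 2)]
      norm_num
    linarith
  have hL0 : 0 ≤ L := by linarith
  set J1 := ⌈L⌉₊ with hJ1def
  have hJ1L : (J1:ℝ) ≤ L + 1 := le_of_lt (Nat.ceil_lt_add_one hL0)
  have h2J1ge : 4 * lam * K * H ≤ (2:ℝ)^J1 := by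
    have h1 : L ≤ (J1:ℝ) := Nat.le_ceil L
    exact le_pow_nat_of_logb_le J1 h4KH0 h1
  have h2J1le : (2:ℝ)^J1 ≤ 8 * lam * K * H := by
    have h1 : (2:ℝ)^J1 ≤ (2:ℝ)^(L+1 : ℝ) := by
      rw [← Real.rpow_natCast 2 J1]
      exact Real.rpow_le_rpow_left_iff (by norm_num) |>.mpr hJ1L
    have h2 : (2:ℝ)^(L+1 : ℝ) = 8 * lam * K * H := by
      rw [Real.rpow_add (by norm_num), Real.rpow_logb (by norm_num) (by norm_num) h4KH0,
        Real.rpow_one]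
      ring
    linarith
  set θ : ℝ := ((1:ℝ)/2)^J1 with hθdef
  have hθeq : θ = ((2:ℝ)^J1)⁻¹ := by rw [hθdef, one_div, inv_pow]
  have h2J1pos : (0:ℝ) < 2^J1 := by positivity
  have hθpos : 0 < θ := by rw [hθeq]; positivity
  have hε₀θ : 1 / (8 * lam * K * H) ≤ θ := by
    rw [hθeq, ← one_div]
    exact one_div_le_one_div_of_le h2J1pos h2J1le
  have hHθ : (H:ℝ) * θ ≤ lam / 4 := by
    have h1 : θ ≤ 1/(4 * lam * K * H) := by
      rw [hθeq, ← one_div]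
      exact one_div_le_one_div_of_le h4KH0 h2J1ge
    have h2 : (H:ℝ) * θ ≤ (H:ℝ) * (1/(4 * lam * K * H)) := by
      apply mul_le_mul_of_nonneg_left h1 (by positivity)
    have h3 : (H:ℝ) * (1/(4 * lam * K * H)) = 1/(4 * lam * K) := by
      field_simp
    have h4 : 1/(4 * lam * K) ≤ lam / 4 := by
      rw [div_le_div_iff₀ (by positivity) (by norm_num)]
      nlinarith
    linarith
  -- buckets
  set I1 := ⌊Real.logb 2 (2 * K * H)⌋₊ + 1 with hI1def
  set buck : Fin K → ℕ := fun k => ⌊Real.logb 2 ((lam + P k)/lam)⌋₊ with hbuckdef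
  have hPy1 : ∀ k, 1 ≤ (lam + P k)/lam := by
    intro k
    rw [le_div_iff₀ hlam0]
    have := hP0 k; linarith
  have hbl : ∀ k, lam * 2^(buck k) ≤ lam + P k := by
    intro k
    have h1 : (2:ℝ)^(buck k) ≤ (lam + P k)/lam := by
      apply pow_nat_le_of_le_logb _ (by linarith [hPy1 k]) 
      exact Nat.floor_le (Real.logb_nonneg (by norm_num) (hPy1 k))
    rw [mul_comm]
    exact (le_div_iff₀ hlam0).mp h1
  have hbu : ∀ k, lam + P k < lam * 2^(buck k + 1) := by
    intro k
    have h1 : (lam + P k)/lam < (2:ℝ)^(buck k + 1) := by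
      apply lt_pow_nat_of_logb_lt _ (by linarith [hPy1 k])
      push_cast
      exact Nat.lt_floor_add_one _
    rw [mul_comm]
    exact (div_lt_iff₀ hlam0).mp h1
  have hbuckI : ∀ k, buck k < I1 := by
    intro k
    have h1 : (lam + P k)/lam ≤ 2 * K * H := by
      rw [div_le_iff₀ hlam0]
      have := hPle k
      nlinarith
    have h2 : Real.logb 2 ((lam + P k)/lam) ≤ Real.logb 2 (2 * K * H) :=
      Real.logb_le_logb_of_le (by norm_num) (by linarith [hPy1 k]) h1
    have h5 : buck k ≤ ⌊Real.logb 2 (2 * ↑K * ↑H)⌋₊ := Nat.floor_le_floor h2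
    exact lt_of_le_of_lt h5 (by rw [hI1def]; exact Nat.lt_succ_self _)
  have hI1L : (I1:ℝ) ≤ L := by
    have h1 : (⌊Real.logb 2 (2 * K * H)⌋₊ : ℝ) ≤ Real.logb 2 (2 * K * H) :=
      Nat.floor_le (Real.logb_nonneg (by norm_num) (by nlinarith))
    have h2 : Real.logb 2 (2 * K * H) + 1 ≤ L := by
      have h3 : Real.logb 2 (2 * (2 * K * H)) = 1 + Real.logb 2 (2 * K * H) := by
        rw [Real.logb_mul (by norm_num) (by positivity), Real.logb_self_eq_one (by norm_num : (1:ℝ) < 2)]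
      have h4 : Real.logb 2 (2 * (2 * ↑K * ↑H)) ≤ Real.logb 2 (4 * lam * ↑K * ↑H) := by
        apply Real.logb_le_logb_of_le (by norm_num) (by positivity)
        nlinarith
      rw [hLdef]
      linarith
    have : (I1:ℝ) = (⌊Real.logb 2 (2 * K * H)⌋₊ : ℝ) + 1 := by
      rw [hI1def]; push_cast; ring
    linarith
  set cap : Fin K → ℝ := fun k => 2 * (lam * 2^(buck k)) with hcapdef
  -- encoded points
  set ep : ℕ → Fin K := fun n => if h : n / H < K then ⟨n/H, h⟩ else ⟨0, hK0⟩ with hepdef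
  set b : ℕ → X := fun n => x (ep n) ⟨n % H, Nat.mod_lt n hH0⟩ with hbdef
  set gs : ℕ → X → ℝ := fun n => G (ep n) with hgsdef
  set v : ℕ → ℝ := fun n => |gs n (b n)| with hvdef
  set vθ : ℕ → ℝ := fun n => if θ < v n then v n else 0 with hvθdef
  set pre : ℕ → ℝ := fun n => ∑ m ∈ Finset.Ico ((n/H)*H) n, vθ m with hpredef
  have hv0 : ∀ n, 0 ≤ v n := fun n => abs_nonneg _
  have hv1 : ∀ n, v n ≤ 1 := fun n => hΨbdd _ (hGΨ (ep n)) _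
  have hvθ0 : ∀ n, 0 ≤ vθ n := by
    intro n; rw [hvθdef]; dsimp only; split
    · exact hv0 n
    · exact le_refl 0
  -- episode structure of the encoding
  have hepk : ∀ (k : Fin K) (n : ℕ), ↑k * H ≤ n → n < ↑k * H + H → ep n = k := by
    intro k n h1 h2
    have hdiv : n / H = ↑k := Nat.div_eq_of_lt_le h1 (by rw [Nat.succ_mul]; exact h2)
    have hlt : n / H < K := by rw [hdiv]; exact k.isLt
    rw [hepdef]
    dsimp only
    rw [dif_pos hlt]
    exact Fin.ext hdiv
  have hepmem : ∀ (k : Fin K) (n : ℕ), n < K * H → (ep n = k ↔ (↑k * H ≤ n ∧ n < ↑k * H + H)) := by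
    intro k n hn
    constructor
    · intro hek
      have hlt : n / H < K := (Nat.div_lt_iff_lt_mul hH0).mpr hn
      have hval : (ep n : ℕ) = n / H := by
        rw [hepdef]; dsimp only; rw [dif_pos hlt]
      have hkn : (↑k : ℕ) = n / H := by rw [← hek, hval]
      constructor
      · rw [hkn]; exact Nat.div_mul_le_self n H
      · rw [hkn]
        calc n < (n/H + 1) * H := lt_div_succ_mul n H hH0
          _ = n/H * H + H := Nat.succ_mul _ _
    · intro ⟨h1, h2⟩; exact hepk k n h1 h2
  have hb_eq : ∀ (k : Fin K) (r : ℕ) (hr : r < H), b (r + ↑k * H) = x k ⟨r, hr⟩ := by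
    intro k r hr
    have h1 : ep (r + ↑k * H) = k := hepk k _ (by omega) (by omega)
    rw [hbdef]
    dsimp only
    rw [h1]
    congr 1
    exact Fin.ext (show (r + ↑k * H) % H = r by
      rw [Nat.add_mul_mod_self_right]; exact Nat.mod_eq_of_lt hr)
  have hepisode : ∀ (k : Fin K) (f : X → ℝ),
      ∑ m ∈ Finset.Ico (↑k*H) (↑k*H + H), |f (b m)| = ∑ h, |f (x k h)| := by
    intro k f
    have hstep : ∑ m ∈ Finset.Ico (↑k*H) (↑k*H + H), |f (b m)| =
        ∑ i ∈ Finset.range H, |f (b (i + ↑k*H))| := by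
      rw [Finset.sum_Ico_eq_sum_range]
      apply Finset.sum_congr
      · congr 1
        omega
      · intro i _
        rw [Nat.add_comm]
    rw [hstep, ← Fin.sum_univ_eq_sum_range (fun i => |f (b (i + ↑k*H))|) H]
    apply Finset.sum_congr rfl
    intro h _
    rw [hb_eq k ↑h h.isLt]
  have hprefix : ∀ (f : X → ℝ) (t : ℕ), t ≤ K →
      ∑ m ∈ Finset.range (t*H), |f (b m)| =
        ∑ k' ∈ Finset.univ.filter (fun k' : Fin K => (k':ℕ) < t), ∑ h, |f (x k' h)| := by
    intro f t
    induction t with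
    | zero => simp
    | succ t ih =>
      intro ht
      have ht' : t ≤ K := Nat.le_of_succ_le ht
      have htK : t < K := ht
      have hsplit : ∑ m ∈ Finset.range ((t+1)*H), |f (b m)| =
          ∑ m ∈ Finset.range (t*H), |f (b m)| +
            ∑ m ∈ Finset.Ico (t*H) (t*H + H), |f (b m)| := by
        rw [Nat.succ_mul, Finset.range_eq_Ico,
          ← Finset.sum_Ico_consecutive _ (Nat.zero_le (t*H)) (Nat.le_add_right (t*H) H),
          ← Finset.range_eq_Ico]
      have hepi : ∑ m ∈ Finset.Ico (t*H) (t*H + H), |f (b m)| =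
          ∑ h, |f (x ⟨t, htK⟩ h)| := hepisode ⟨t, htK⟩ f
      have hins : (Finset.univ.filter (fun k' : Fin K => (k':ℕ) < t + 1)) =
          insert ⟨t, htK⟩ (Finset.univ.filter (fun k' : Fin K => (k':ℕ) < t)) := by
        ext k'
        simp only [Finset.mem_filter, Finset.mem_univ, true_and, Finset.mem_insert, Fin.ext_iff]
        omega
      rw [hsplit, ih ht', hepi, hins, Finset.sum_insert (by simp)]
      ring
  have hPk : ∀ k : Fin K, ∑ m ∈ Finset.range (↑k*H), |G k (b m)| = P k := by
    intro k
    rw [hprefix (G k) ↑k (le_of_lt k.isLt), hPdef]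
    dsimp only
    congr 1
    ext k'
    simp only [Finset.mem_filter, Finset.mem_univ, true_and, Finset.mem_Iio, Fin.lt_def]
  have hDk : ∀ k : Fin K, ∑ m ∈ Finset.Ico (↑k*H) (↑k*H + H), v m = D k := by
    intro k
    have h1 : ∀ m ∈ Finset.Ico (↑k*H) (↑k*H + H), v m = |G k (b m)| := by
      intro m hm
      rw [Finset.mem_Ico] at hm
      rw [hvdef]
      dsimp only
      rw [hgsdef]
      dsimp only
      rw [hepk k m hm.1 hm.2]
    rw [Finset.sum_congr rfl h1, hepisode k (G k), hDdef]
  -- heavy values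
  have hhalf : ∀ m : ℕ, ((1:ℝ)/2)^m = ((2:ℝ)^m)⁻¹ := fun m => by rw [one_div, inv_pow]
  have hvθ_eq : ∀ (s : Finset ℕ),
      ∑ m ∈ s, vθ m = ∑ m ∈ s.filter (fun m => θ < v m), v m := by
    intro s
    rw [Finset.sum_filter]
  have hheavy_mass : ∀ k ∈ Bset, cap k ≤ ∑ m ∈ Finset.Ico (↑k*H) (↑k*H + H), vθ m := by
    intro k hk
    have hterm : ∀ m ∈ Finset.Ico (↑k*H) (↑k*H + H), v m - vθ m ≤ θ := by
      intro m _
      rw [hvθdef]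
      dsimp only
      split
      · simp only [sub_self]; exact le_of_lt hθpos
      · next hc => simp only [sub_zero]; exact not_lt.mp hc
    have h1 : ∑ m ∈ Finset.Ico (↑k*H) (↑k*H + H), (v m - vθ m) ≤ (H:ℝ) * θ := by
      calc ∑ m ∈ Finset.Ico (↑k*H) (↑k*H + H), (v m - vθ m)
          ≤ ∑ _m ∈ Finset.Ico (↑k*H) (↑k*H + H), θ := Finset.sum_le_sum hterm
        _ = (H:ℝ) * θ := by
            rw [Finset.sum_const, Nat.card_Ico, nsmul_eq_mul]
            congr 1
            push_cast [Nat.add_sub_cancel_left]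
            ring
    have h2 : ∑ m ∈ Finset.Ico (↑k*H) (↑k*H + H), (v m - vθ m)
        = D k - ∑ m ∈ Finset.Ico (↑k*H) (↑k*H + H), vθ m := by
      rw [Finset.sum_sub_distrib, hDk k]
    have h3 := hD3 k hk
    have h4 := hbl k
    have h5 := hP0 k
    rw [hcapdef]
    dsimp only
    linarith [hHθ]
  have hpre_eq : ∀ (k : Fin K) (n : ℕ), ↑k*H ≤ n → n < ↑k*H + H →
      pre n = ∑ m ∈ Finset.Ico (↑k*H) n, vθ m := by
    intro k n h1 h2
    rw [hpredef]
    dsimp only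
    rw [Nat.div_eq_of_lt_le h1 (by rw [Nat.succ_mul]; exact h2)]
  -- selected points
  set Sel : Finset ℕ := (Finset.range (K*H)).filter
    (fun n => ep n ∈ Bset ∧ θ < v n ∧ pre n < cap (ep n)) with hSeldef
  have hSelmem : ∀ n ∈ Sel, n < K*H ∧ ep n ∈ Bset ∧ θ < v n ∧ pre n < cap (ep n) := by
    intro n hn
    rw [hSeldef, Finset.mem_filter, Finset.mem_range] at hn
    exact ⟨hn.1, hn.2⟩
  have hepiSel : ∀ k ∈ Bset, Sel.filter (fun n => ep n = k) =
      (Finset.Ico (↑k*H) (↑k*H + H)).filter (fun n => θ < v n ∧ pre n < cap k) := by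
    intro k hk
    ext n
    simp only [hSeldef, Finset.mem_filter, Finset.mem_range, Finset.mem_Ico]
    constructor
    · rintro ⟨⟨hn, hB, hvn, hp⟩, hek⟩
      have hmem := (hepmem k n hn).mp hek
      rw [hek] at hp
      exact ⟨⟨hmem.1, hmem.2⟩, hvn, hp⟩
    · rintro ⟨⟨h1, h2⟩, hvn, hp⟩
      have hek : ep n = k := hepk k n h1 h2
      have hn : n < K*H := by
        have hkk : ↑k*H + H ≤ K*H := by
          calc ↑k*H + H = (↑k+1)*H := (Nat.succ_mul _ _).symm
            _ ≤ K*H := Nat.mul_le_mul_right H k.isLt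
        omega
      exact ⟨⟨hn, by rw [hek]; exact hk, hvn, by rw [hek]; exact hp⟩, hek⟩
  have hselmass_k : ∀ k ∈ Bset, cap k ≤ ∑ n ∈ Sel.filter (fun n => ep n = k), v n := by
    intro k hk
    rw [hepiSel k hk]
    have hsm := selmass (↑k*H) (↑k*H + H) vθ hvθ0 (cap k) (hheavy_mass k hk)
    refine le_trans hsm ?_
    have e1 : (Finset.Ico (↑k*H) (↑k*H+H)).filter
          (fun m => (∑ m' ∈ Finset.Ico (↑k*H) m, vθ m') < cap k)
        = (Finset.Ico (↑k*H) (↑k*H+H)).filter (fun m => pre m < cap k) := by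
      apply Finset.filter_congr
      intro m hm
      rw [Finset.mem_Ico] at hm
      rw [hpre_eq k m hm.1 hm.2]
    rw [e1, hvθ_eq, Finset.filter_filter]
    apply le_of_eq
    apply Finset.sum_congr
    · ext m
      simp only [Finset.mem_filter]
      tauto
    · intros; rfl
  -- levels
  set lvl : ℕ → ℕ := fun n => ⌊Real.logb 2 (v n)⁻¹⌋₊ with hlvldef
  have hlvl : ∀ n, θ < v n →
      ((1/2:ℝ)^(lvl n + 1) < v n ∧ v n ≤ (1/2:ℝ)^(lvl n) ∧ lvl n < J1) := by
    intro n hn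
    have hvpos : 0 < v n := lt_trans hθpos hn
    have hy1 : 1 ≤ (v n)⁻¹ := one_le_inv_iff₀.mpr ⟨hvpos, hv1 n⟩
    have hypos : (0:ℝ) < (v n)⁻¹ := by positivity
    have hlog0 : 0 ≤ Real.logb 2 (v n)⁻¹ := Real.logb_nonneg (by norm_num) hy1
    have hup : (v n)⁻¹ < (2:ℝ)^(lvl n + 1) := by
      apply lt_pow_nat_of_logb_lt _ hypos
      push_cast
      have h1 : Real.logb 2 (v n)⁻¹ < ⌊Real.logb 2 (v n)⁻¹⌋₊ + 1 := Nat.lt_floor_add_one _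
      have h2 : (lvl n : ℝ) = (⌊Real.logb 2 (v n)⁻¹⌋₊ : ℝ) := by rw [hlvldef]
      linarith
    have hdown : (2:ℝ)^(lvl n) ≤ (v n)⁻¹ := by
      apply pow_nat_le_of_le_logb _ hypos
      have h2 : (lvl n : ℝ) = (⌊Real.logb 2 (v n)⁻¹⌋₊ : ℝ) := by rw [hlvldef]
      rw [h2]
      exact_mod_cast Nat.floor_le hlog0
    refine ⟨?_, ?_, ?_⟩
    · have h := inv_strictAnti₀ hypos hup
      rw [inv_inv] at h
      rw [hhalf]
      exact h
    · have h := inv_anti₀ (by positivity) hdown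
      rw [inv_inv] at h
      rw [hhalf]
      exact h
    · have hvJ : (v n)⁻¹ < (2:ℝ)^J1 := by
        have h := inv_strictAnti₀ hθpos hn
        rw [hθeq, inv_inv] at h
        exact h
      have : (2:ℝ)^(lvl n) < (2:ℝ)^J1 := lt_of_le_of_lt hdown hvJ
      exact (pow_lt_pow_iff_right₀ (by norm_num : (1:ℝ) < 2)).mp this
  -- per-bucket-per-level mass bound via the eluder dimension
  have hmassFij : ∀ i : ℕ, ∀ j : ℕ, j < J1 →
      ∑ n ∈ Sel.filter (fun n => buck (ep n) = i ∧ lvl n = j), v n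
        ≤ (8*(lam * 2^i) + 2) * d := by
    intro i j hj
    set F := Sel.filter (fun n => buck (ep n) = i ∧ lvl n = j) with hFdef
    set ε : ℝ := ((1:ℝ)/2)^(j+1) with hεdef
    set Cc : ℝ := 4*(lam * 2^i) with hCcdef
    have hεpos : 0 < ε := by rw [hεdef]; positivity
    have hCc0 : 0 ≤ Cc := by rw [hCcdef]; positivity
    set N := ⌈Cc / ε⌉₊ with hNdef
    have hNC : Cc < ((N:ℝ)+1) * ε := by
      have h1 : Cc/ε ≤ (N:ℝ) := Nat.le_ceil _
      have h2 : Cc/ε < (N:ℝ)+1 := by linarith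
      calc Cc = (Cc/ε)*ε := by field_simp
        _ < ((N:ℝ)+1)*ε := mul_lt_mul_of_pos_right h2 hεpos
    have hFmem : ∀ n ∈ F, n ∈ Sel ∧ buck (ep n) = i ∧ lvl n = j := by
      intro n hn
      rw [hFdef, Finset.mem_filter] at hn
      exact ⟨hn.1, hn.2⟩
    have hcard : F.card ≤ (N+1)*d := by
      apply lemA2 Ψ (1/(8*lam*K*H)) d hd ε Cc ?_ N hNC F b gs ?_ ?_ ?_
      · -- ε₀ ≤ ε
        refine le_trans hε₀θ ?_
        rw [hθdef, hεdef]
        exact pow_le_pow_of_le_one (by norm_num) (by norm_num) hj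
      · intro n _
        exact hGΨ (ep n)
      · intro n hn
        obtain ⟨hnSel, _, hlvln⟩ := hFmem n hn
        obtain ⟨_, _, hθn, _⟩ := hSelmem n hnSel
        have := (hlvl n hθn).1
        rw [hlvln] at this
        exact this
      · intro n hn
        obtain ⟨hnSel, hbuckn, _⟩ := hFmem n hn
        obtain ⟨hnKH, hBn, hθn, hpn⟩ := hSelmem n hnSel
        have hepn := (hepmem (ep n) n hnKH).mp rfl
        have hsplit := Finset.sum_filter_add_sum_filter_not (F.filter (fun m => m < n))
          (fun m => m < ↑(ep n)*H) (fun m => |gs n (b m)|)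
        have hpart1 : ∑ m ∈ (F.filter (fun m => m < n)).filter (fun m => m < ↑(ep n)*H),
            |gs n (b m)| ≤ P (ep n) := by
          have hsub : (F.filter (fun m => m < n)).filter (fun m => m < ↑(ep n)*H)
              ⊆ Finset.range (↑(ep n)*H) := by
            intro m hm
            rw [Finset.mem_filter] at hm
            exact Finset.mem_range.mpr hm.2
          calc ∑ m ∈ (F.filter (fun m => m < n)).filter (fun m => m < ↑(ep n)*H), |gs n (b m)|
              ≤ ∑ m ∈ Finset.range (↑(ep n)*H), |gs n (b m)| :=
                Finset.sum_le_sum_of_subset_of_nonneg hsub (fun m _ _ => abs_nonneg _)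
            _ = P (ep n) := hPk (ep n)
        have hpart2 : ∑ m ∈ (F.filter (fun m => m < n)).filter (fun m => ¬ m < ↑(ep n)*H),
            |gs n (b m)| ≤ pre n := by
          have hcongr : ∀ m ∈ (F.filter (fun m => m < n)).filter (fun m => ¬ m < ↑(ep n)*H),
              |gs n (b m)| = v m := by
            intro m hm
            rw [Finset.mem_filter, Finset.mem_filter] at hm
            have hmn : m < n := hm.1.2
            have hmlo : ↑(ep n)*H ≤ m := not_lt.mp hm.2
            have hepm : ep m = ep n := hepk (ep n) m hmlo (by omega)
            have hvm : v m = |G (ep m) (b m)| := rfl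
            rw [hvm, hepm]
          rw [Finset.sum_congr rfl hcongr]
          have hsub : (F.filter (fun m => m < n)).filter (fun m => ¬ m < ↑(ep n)*H)
              ⊆ (Finset.Ico (↑(ep n)*H) n).filter (fun m => θ < v m) := by
            intro m hm
            rw [Finset.mem_filter, Finset.mem_filter] at hm
            obtain ⟨⟨hmF, hmn⟩, hmlo⟩ := hm
            obtain ⟨hmSel, _, _⟩ := hFmem m hmF
            obtain ⟨_, _, hθm, _⟩ := hSelmem m hmSel
            rw [Finset.mem_filter, Finset.mem_Ico]
            exact ⟨⟨not_lt.mp hmlo, hmn⟩, hθm⟩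
          calc ∑ m ∈ (F.filter (fun m => m < n)).filter (fun m => ¬ m < ↑(ep n)*H), v m
              ≤ ∑ m ∈ (Finset.Ico (↑(ep n)*H) n).filter (fun m => θ < v m), v m :=
                Finset.sum_le_sum_of_subset_of_nonneg hsub (fun m _ _ => hv0 m)
            _ = ∑ m ∈ Finset.Ico (↑(ep n)*H) n, vθ m := (hvθ_eq _).symm
            _ = pre n := (hpre_eq (ep n) n hepn.1 hepn.2).symm
        have hcapv : cap (ep n) = 2*(lam*2^i) := by
          rw [hcapdef]
          dsimp only
          rw [hbuckn]
        have hPv : lam + P (ep n) < 2*(lam*2^i) := by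
          have h := hbu (ep n)
          rw [hbuckn] at h
          have : lam*2^(i+1) = 2*(lam*2^i) := by ring
          linarith
        rw [hCcdef]
        have hgseq : ∀ m, |gs n (b m)| = |gs n (b m)| := fun m => rfl
        calc ∑ m ∈ F.filter (fun m => m < n), |gs n (b m)|
            = ∑ m ∈ (F.filter (fun m => m < n)).filter (fun m => m < ↑(ep n)*H), |gs n (b m)|
              + ∑ m ∈ (F.filter (fun m => m < n)).filter (fun m => ¬ m < ↑(ep n)*H),
                |gs n (b m)| := hsplit.symm
          _ ≤ P (ep n) + pre n := add_le_add hpart1 hpart2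
          _ ≤ 4*(lam*2^i) := by
              rw [hcapv] at hpn
              linarith
    -- convert cardinality to mass
    have hvle : ∀ n ∈ F, v n ≤ ((1:ℝ)/2)^j := by
      intro n hn
      obtain ⟨hnSel, _, hlvln⟩ := hFmem n hn
      obtain ⟨_, _, hθn, _⟩ := hSelmem n hnSel
      have := (hlvl n hθn).2.1
      rw [hlvln] at this
      exact this
    have hsum : ∑ n ∈ F, v n ≤ (F.card : ℝ) * ((1/2:ℝ)^j) := by
      calc ∑ n ∈ F, v n ≤ ∑ _n ∈ F, ((1:ℝ)/2)^j := Finset.sum_le_sum hvle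
        _ = (F.card : ℝ) * ((1/2:ℝ)^j) := by rw [Finset.sum_const, nsmul_eq_mul]
    have hcardR : (F.card : ℝ) ≤ ((N:ℝ)+1)*(d:ℝ) := by exact_mod_cast hcard
    have hCε : Cc/ε = Cc * 2^(j+1) := by
      rw [hεdef, hhalf, div_eq_mul_inv, inv_inv]
    have hkey : (((N:ℝ)+1))*((1/2:ℝ)^j) ≤ 8*(lam*2^i) + 2 := by
      have h2j : ((1:ℝ)/2)^j * 2^(j+1) = 2 := by
        rw [hhalf j, pow_succ]
        have : ((2:ℝ)^j) ≠ 0 := by positivity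
        field_simp
      have hNle : (N:ℝ) ≤ Cc/ε + 1 := le_of_lt (Nat.ceil_lt_add_one (by positivity))
      have h1 : ((N:ℝ)+1) ≤ Cc*2^(j+1) + 2 := by rw [← hCε]; linarith
      have h3 : (Cc*2^(j+1) + 2)*((1/2:ℝ)^j) = Cc*2 + 2*((1/2:ℝ)^j) := by
        calc (Cc*2^(j+1) + 2)*((1/2:ℝ)^j) = Cc*(((1:ℝ)/2)^j * 2^(j+1)) + 2*((1/2:ℝ)^j) := by
              ring
          _ = Cc*2 + 2*((1/2:ℝ)^j) := by rw [h2j]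
      have h4 : ((1:ℝ)/2)^j ≤ 1 := pow_le_one₀ (by norm_num) (by norm_num)
      calc ((N:ℝ)+1)*((1/2:ℝ)^j) ≤ (Cc*2^(j+1) + 2)*((1/2:ℝ)^j) :=
            mul_le_mul_of_nonneg_right h1 (by positivity)
        _ = Cc*2 + 2*((1/2:ℝ)^j) := h3
        _ ≤ 8*(lam*2^i) + 2 := by
            rw [hCcdef]
            nlinarith
    calc ∑ n ∈ F, v n ≤ (F.card : ℝ) * ((1/2:ℝ)^j) := hsum
      _ ≤ (((N:ℝ)+1)*(d:ℝ)) * ((1/2:ℝ)^j) :=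
          mul_le_mul_of_nonneg_right hcardR (by positivity)
      _ = (((N:ℝ)+1)*((1/2:ℝ)^j))*(d:ℝ) := by ring
      _ ≤ (8*(lam*2^i) + 2) * d := mul_le_mul_of_nonneg_right hkey (Nat.cast_nonneg d)
  -- bad set as a finset
  have hBfin : Bset.Finite := Set.toFinite Bset
  set BF := hBfin.toFinset with hBFdef
  have hBFmem : ∀ k, k ∈ BF ↔ k ∈ Bset := fun k => Set.Finite.mem_toFinset hBfin
  -- per-bucket episode count
  have hBi : ∀ i : ℕ, ((BF.filter (fun k => buck k = i)).card : ℝ) * (2*(lam*2^i))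
      ≤ (J1:ℝ) * ((8*(lam*2^i)+2) * d) := by
    intro i
    set Seli := Sel.filter (fun n => buck (ep n) = i) with hSelidef
    set Bi := BF.filter (fun k => buck k = i) with hBidef
    have hlow : (Bi.card : ℝ) * (2*(lam*2^i)) ≤ ∑ n ∈ Seli, v n := by
      have hmaps : ∀ n ∈ Seli, ep n ∈ Bi := by
        intro n hn
        rw [hSelidef, Finset.mem_filter] at hn
        obtain ⟨hnSel, hbn⟩ := hn
        obtain ⟨_, hBn, _, _⟩ := hSelmem n hnSel
        rw [hBidef, Finset.mem_filter]
        exact ⟨(hBFmem (ep n)).mpr hBn, hbn⟩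
      have hfib : ∑ k ∈ Bi, ∑ n ∈ Seli.filter (fun n => ep n = k), v n = ∑ n ∈ Seli, v n :=
        Finset.sum_fiberwise_of_maps_to hmaps v
      have heach : ∀ k ∈ Bi, 2*(lam*2^i) ≤ ∑ n ∈ Seli.filter (fun n => ep n = k), v n := by
        intro k hk
        rw [hBidef, Finset.mem_filter] at hk
        have hkB : k ∈ Bset := (hBFmem k).mp hk.1
        have hbk : buck k = i := hk.2
        have hsame : Seli.filter (fun n => ep n = k) = Sel.filter (fun n => ep n = k) := by
          rw [hSelidef, Finset.filter_filter]
          apply Finset.filter_congr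
          intro n _
          constructor
          · rintro ⟨_, h⟩; exact h
          · intro h; exact ⟨by rw [h, hbk], h⟩
        rw [hsame]
        have h := hselmass_k k hkB
        have hcapk : cap k = 2*(lam*2^i) := by
          rw [hcapdef]; dsimp only; rw [hbk]
        rw [hcapk] at h
        exact h
      calc (Bi.card : ℝ) * (2*(lam*2^i)) = ∑ _k ∈ Bi, 2*(lam*2^i) := by
            rw [Finset.sum_const, nsmul_eq_mul]
        _ ≤ ∑ k ∈ Bi, ∑ n ∈ Seli.filter (fun n => ep n = k), v n := Finset.sum_le_sum heach
        _ = ∑ n ∈ Seli, v n := hfib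
    have hup : ∑ n ∈ Seli, v n ≤ (J1:ℝ) * ((8*(lam*2^i)+2) * d) := by
      have hmaps2 : ∀ n ∈ Seli, lvl n ∈ Finset.range J1 := by
        intro n hn
        rw [hSelidef, Finset.mem_filter] at hn
        obtain ⟨_, _, hθn, _⟩ := hSelmem n hn.1
        exact Finset.mem_range.mpr (hlvl n hθn).2.2
      have hfib2 : ∑ j ∈ Finset.range J1, ∑ n ∈ Seli.filter (fun n => lvl n = j), v n
          = ∑ n ∈ Seli, v n := Finset.sum_fiberwise_of_maps_to hmaps2 v
      have heachj : ∀ j ∈ Finset.range J1,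
          ∑ n ∈ Seli.filter (fun n => lvl n = j), v n ≤ (8*(lam*2^i)+2) * d := by
        intro j hj
        have : Seli.filter (fun n => lvl n = j)
            = Sel.filter (fun n => buck (ep n) = i ∧ lvl n = j) := by
          rw [hSelidef, Finset.filter_filter]
        rw [this]
        exact hmassFij i j (Finset.mem_range.mp hj)
      calc ∑ n ∈ Seli, v n
          = ∑ j ∈ Finset.range J1, ∑ n ∈ Seli.filter (fun n => lvl n = j), v n := hfib2.symm
        _ ≤ ∑ _j ∈ Finset.range J1, (8*(lam*2^i)+2) * d := Finset.sum_le_sum heachj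
        _ = (J1:ℝ) * ((8*(lam*2^i)+2) * d) := by
            rw [Finset.sum_const, Finset.card_range, nsmul_eq_mul]
    linarith
  -- total count
  have hBcard : (BF.card : ℝ) ≤ (I1:ℝ) * ((5*(J1:ℝ)*(d:ℝ))) := by
    have hfib : BF.card = ∑ i ∈ Finset.range I1, (BF.filter (fun k => buck k = i)).card :=
      Finset.card_eq_sum_card_fiberwise (fun k _ => Finset.mem_range.mpr (hbuckI k))
    have heach : ∀ i ∈ Finset.range I1,
        ((BF.filter (fun k => buck k = i)).card : ℝ) ≤ 5*(J1:ℝ)*(d:ℝ) := by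
      intro i _
      have h := hBi i
      have hpos : (0:ℝ) < 2*(lam*2^i) := by positivity
      have h2i : (1:ℝ) ≤ 2^i := one_le_pow₀ (by norm_num)
      rw [← mul_le_mul_iff_of_pos_right hpos]
      calc ((BF.filter (fun k => buck k = i)).card : ℝ) * (2*(lam*2^i))
          ≤ (J1:ℝ) * ((8*(lam*2^i)+2) * d) := h
        _ ≤ (J1:ℝ) * ((10*(lam*2^i)) * d) := by
            apply mul_le_mul_of_nonneg_left _ (Nat.cast_nonneg J1)
            apply mul_le_mul_of_nonneg_right _ (Nat.cast_nonneg d)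
            nlinarith
        _ = 5*(J1:ℝ)*(d:ℝ) * (2*(lam*2^i)) := by ring
    calc (BF.card : ℝ) = ∑ i ∈ Finset.range I1,
          ((BF.filter (fun k => buck k = i)).card : ℝ) := by
          rw [hfib]; push_cast; rfl
      _ ≤ ∑ _i ∈ Finset.range I1, 5*(J1:ℝ)*(d:ℝ) := Finset.sum_le_sum heach
      _ = (I1:ℝ) * (5*(J1:ℝ)*(d:ℝ)) := by
          rw [Finset.sum_const, Finset.card_range, nsmul_eq_mul]
  -- finish
  have hncard : (Bset.ncard : ℝ) = (BF.card : ℝ) := by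
    rw [Set.ncard_eq_toFinset_card Bset hBfin]
  rw [hncard]
  have h1 : (I1:ℝ) ≤ L := hI1L
  have h2 : (J1:ℝ) ≤ L + 1 := hJ1L
  have hd0 : (0:ℝ) ≤ (d:ℝ) := Nat.cast_nonneg d
  have hJ0 : (0:ℝ) ≤ (J1:ℝ) := Nat.cast_nonneg _
  have h3 : (I1:ℝ)*(J1:ℝ) ≤ L*(L+1) := mul_le_mul h1 h2 hJ0 (by linarith)
  have h5 : (I1:ℝ) * (5*(J1:ℝ)*(d:ℝ)) ≤ 5*(L*(L+1))*(d:ℝ) := by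
    have : (I1:ℝ) * (5*(J1:ℝ)*(d:ℝ)) = 5*((I1:ℝ)*(J1:ℝ))*(d:ℝ) := by ring
    rw [this]
    apply mul_le_mul_of_nonneg_right _ hd0
    linarith
  have h6 : 5*(L*(L+1))*(d:ℝ) ≤ 13*L^2*(d:ℝ) := by
    apply mul_le_mul_of_nonneg_right _ hd0
    nlinarith
  linarith
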